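/- Let m ≥ 2 and fix any τ ∈ ZZ/m and any 2 ≤ a ≤ 6. For y ∈ (ZZ/m)^6, define z by z_i = y_i + 1 for i < a; z_a = y_a + 1 if some coordinate among y_1, …, y_{a−1} equals τ − 1, and z_a = y_a otherwise; and z_i = y_i for i > a. Then M_τ^a(z) = y, and this z is the unique preimage of y under M_τ^a. -/
import Mathlib


/-- `p_r ∈ (ℤ/m)^6` has its first `r` coordinates equal to `1` and the rest `0`. -/
def pvec (m : ℕ) (r : ℕ) : Fin 6 → ZMod m := fun j => if (j : ℕ) < r then 1 else 0

/-- `ρ_τ(z)`: the least index `i ∈ {1,…,6}` with `z_i = τ`, or `6` if none exists.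
(`Fin 6` index `i₀` corresponds to the coordinate `i₀ + 1`.) -/
def rho {m : ℕ} (τ : ZMod m) (z : Fin 6 → ZMod m) : ℕ :=
  if h : (Finset.univ.filter fun i : Fin 6 => z i = τ).Nonempty
  then ((Finset.univ.filter fun i : Fin 6 => z i = τ).min' h : Fin 6).val + 1
  else 6

/-- `M_τ^Δ(z) = z − p_{ρ_τ(z)}`. -/
def Mdelta {m : ℕ} (τ : ZMod m) (z : Fin 6 → ZMod m) : Fin 6 → ZMod m :=
  z - pvec m (rho τ z)

/-- `M_τ^a(z) = z − p_a` if `ρ_τ(z) < a`, and `z − p_{a−1}` if `ρ_τ(z) ≥ a`. -/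
def Mnum {m : ℕ} (τ : ZMod m) (a : ℕ) (z : Fin 6 → ZMod m) : Fin 6 → ZMod m :=
  if rho τ z < a then z - pvec m a else z - pvec m (a - 1)

/-- The explicit preimage: `z_i = y_i + 1` for `i < a`; `z_a = y_a + 1` if some
coordinate among `y_1, …, y_{a−1}` equals `τ − 1`, else `z_a = y_a`; `z_i = y_i`
for `i > a`.  (`Fin 6` index `i₀` corresponds to coordinate `i₀ + 1`.) -/
def zOf {m : ℕ} (τ : ZMod m) (a : ℕ) (y : Fin 6 → ZMod m) : Fin 6 → ZMod m :=
  fun i =>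
    if (i : ℕ) + 1 < a then y i + 1
    else if (i : ℕ) + 1 = a then
      (if ∃ j : Fin 6, (j : ℕ) + 1 < a ∧ y j = τ - 1 then y i + 1 else y i)
    else y i

lemma rho_lt_iff {m : ℕ} (τ : ZMod m) (z : Fin 6 → ZMod m) (a : ℕ) (ha6 : a ≤ 6) :
    rho τ z < a ↔ ∃ i : Fin 6, (i : ℕ) + 1 < a ∧ z i = τ := by
  unfold rho
  split_ifs with h
  · constructor
    · intro hlt
      refine ⟨(Finset.univ.filter fun i : Fin 6 => z i = τ).min' h, hlt, ?_⟩
      have := Finset.min'_mem _ h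
      simpa using this
    · rintro ⟨i, hi, hzi⟩
      have hle : (Finset.univ.filter fun i : Fin 6 => z i = τ).min' h ≤ i :=
        Finset.min'_le _ _ (by simp [hzi])
      have : ((Finset.univ.filter fun i : Fin 6 => z i = τ).min' h : Fin 6).val ≤ (i : ℕ) := hle
      omega
  · constructor
    · intro hlt; omega
    · rintro ⟨i, hi, hzi⟩
      exact absurd ⟨i, by simp [hzi]⟩ h

theorem stmt19 (m : ℕ) (hm : 2 ≤ m) (τ : ZMod m) (a : ℕ) (ha2 : 2 ≤ a) (ha6 : a ≤ 6)
    (y : Fin 6 → ZMod m) :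
    Mnum τ a (zOf τ a y) = y ∧ ∀ z : Fin 6 → ZMod m, Mnum τ a z = y → z = zOf τ a y := by
  constructor
  · by_cases hE : ∃ j : Fin 6, (j : ℕ) + 1 < a ∧ y j = τ - 1
    · have hr : rho τ (zOf τ a y) < a := by
        rw [rho_lt_iff τ _ a ha6]
        obtain ⟨j, hj, hyj⟩ := hE
        exact ⟨j, hj, by simp [zOf, hj, hyj]⟩
      funext i
      simp only [Mnum, hr, if_pos, Pi.sub_apply]
      by_cases h1 : (i : ℕ) + 1 < a
      · simp [zOf, pvec, h1, show (i : ℕ) < a by omega]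
      · by_cases h2 : (i : ℕ) + 1 = a
        · simp [zOf, pvec, h1, h2, hE, show (i : ℕ) < a by omega]
        · simp [zOf, pvec, h1, h2, show ¬ (i : ℕ) < a by omega]
    · have hr : ¬ rho τ (zOf τ a y) < a := by
        rw [rho_lt_iff τ _ a ha6]
        rintro ⟨i, hi, hzi⟩
        refine hE ⟨i, hi, ?_⟩
        have h : y i + 1 = τ := by simpa [zOf, hi] using hzi
        exact eq_sub_of_add_eq h
      funext i
      simp only [Mnum, hr, if_neg, Pi.sub_apply]
      by_cases h1 : (i : ℕ) + 1 < a
      · simp [zOf, pvec, h1, show (i : ℕ) < a - 1 by omega]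
      · by_cases h2 : (i : ℕ) + 1 = a
        · simp [zOf, pvec, h1, h2, hE, show ¬ (i : ℕ) < a - 1 by omega]
        · simp [zOf, pvec, h1, h2, show ¬ (i : ℕ) < a - 1 by omega]
  · intro z hz
    by_cases hr : rho τ z < a
    · have hz' : z = y + pvec m a := by
        have : z - pvec m a = y := by simpa [Mnum, hr] using hz
        rw [← this]; ring
      have hE : ∃ j : Fin 6, (j : ℕ) + 1 < a ∧ y j = τ - 1 := by
        obtain ⟨i, hi, hzi⟩ := (rho_lt_iff τ z a ha6).mp hr
        refine ⟨i, hi, ?_⟩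
        have : y i + 1 = τ := by
          have := hzi
          rw [hz'] at this
          simpa [pvec, show (i : ℕ) < a by omega] using this
        rw [← this]; ring
      funext i
      rw [hz']
      by_cases h1 : (i : ℕ) + 1 < a
      · simp [zOf, pvec, h1, show (i : ℕ) < a by omega]
      · by_cases h2 : (i : ℕ) + 1 = a
        · simp [zOf, pvec, h1, h2, hE, show (i : ℕ) < a by omega]
        · simp [zOf, pvec, h1, h2, show ¬ (i : ℕ) < a by omega]
    · have hz' : z = y + pvec m (a - 1) := by
        have : z - pvec m (a - 1) = y := by simpa [Mnum, hr] using hz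
        rw [← this]; ring
      have hE : ¬ ∃ j : Fin 6, (j : ℕ) + 1 < a ∧ y j = τ - 1 := by
        rintro ⟨j, hj, hyj⟩
        apply hr
        rw [rho_lt_iff τ z a ha6]
        refine ⟨j, hj, ?_⟩
        rw [hz']
        simp [pvec, show (j : ℕ) < a - 1 by omega, hyj]
      funext i
      rw [hz']
      by_cases h1 : (i : ℕ) + 1 < a
      · simp [zOf, pvec, h1, show (i : ℕ) < a - 1 by omega]
      · by_cases h2 : (i : ℕ) + 1 = a
        · simp [zOf, pvec, h1, h2, hE, show ¬ (i : ℕ) < a - 1 by omega]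
        · simp [zOf, pvec, h1, h2, show ¬ (i : ℕ) < a - 1 by omega]
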